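/- arXiv:2605.21185 — 2 statements merged into one kernel-verified Lean document; each statement's English description precedes it below -/
import Mathlib

section
/- Let k ≥ 2, ε_r > 0, let P_X be a distribution on {1,…,k} with p_i = P_X(i) > 0 and p_1 ≤ … ≤ p_k, and let P_{Y|X} be the k-randomized response mechanism with α = e^{ε_r}/(e^{ε_r}+k−1), β = 1/(e^{ε_r}+k−1), q_j = β + (α−β)p_j. Fix δ ∈ (q_1, 1), let N ∈ {2,…,k} be the unique index with Σ_{j=1}^{N−1} q_j < δ ≤ Σ_{j=1}^{N} q_j, and set θ = (δ − Σ_{j=1}^{N−1} q_j)/q_N ∈ (0,1]. Suppose the prior satisfies p_N ≤ (α Σ_{j=1}^{N−1} p_j + β)/((N−2)α + β). Then the PML envelope satisfies ε_c(δ) ≥ h_δ(θ), where h_δ(θ) = log(α/q_{N−1}) if 0 < θ ≤ θ_1; h_δ(θ) = log(((N−1)α + θβ)/δ) if θ_1 < θ ≤ θ_2; and h_δ(θ) = log(α/q_N) if θ_2 < θ ≤ 1; with θ_1 = α((N−2)q_{N−1} − Σ_{j=1}^{N−2} q_j)/(α q_N − β q_{N−1}) and θ_2 = α((N−1)q_N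 − Σ_{j=1}^{N−1} q_j)/(q_N(α−β)). -/
set_option linter.unusedSectionVars false
set_option linter.unusedVariables false
set_option maxHeartbeats 1000000


open Real Finset
open scoped Classical

noncomputable section

/-- Marginal distribution of the first coordinate of a joint distribution. -/
def margX {X Y : Type} [Fintype Y] (P : X → Y → ℝ) (x : X) : ℝ := ∑ y, P x y

/-- Marginal distribution of the second coordinate of a joint distribution. -/
def margY {X Y : Type} [Fintype X] (P : X → Y → ℝ) (y : Y) : ℝ := ∑ x, P x y

/-- `P` is a joint probability distribution on `X × Y`. -/
def IsJoint {X Y : Type} [Fintype X] [Fintype Y] (P : X → Y → ℝ) : Prop :=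
  (∀ x y, 0 ≤ P x y) ∧ (∑ x, ∑ y, P x y) = 1

/-- Conditional probability `P_{Y|X=x}(y)` of the second coordinate given the first. -/
def condYX {X Y : Type} [Fintype Y] (P : X → Y → ℝ) (x : X) (y : Y) : ℝ :=
  P x y / margX P x

/-- Pointwise maximal leakage of the outcome `y`:
`ℓ(X → y) = log (max_x P_{Y|X=x}(y) / P_Y(y))`. -/
def pml {X Y : Type} [Fintype X] [Fintype Y] (P : X → Y → ℝ) (y : Y) : ℝ :=
  Real.log ((⨆ x, condYX P x y) / margY P y)

/-- `K` is a Markov kernel (a conditional distribution). -/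
def IsKernel {Y Z : Type} [Fintype Z] (K : Y → Z → ℝ) : Prop :=
  (∀ y z, 0 ≤ K y z) ∧ ∀ y, (∑ z, K y z) = 1

/-- Joint distribution of `(X, Z)` obtained by post-processing `Y` with the kernel `K`
(marginalizing out `Y`); this encodes the Markov chain `X - Y - Z`. -/
def pushKernel {X Y Z : Type} [Fintype Y] (P : X → Y → ℝ) (K : Y → Z → ℝ)
    (x : X) (z : Z) : ℝ :=
  ∑ y, P x y * K y z

/-- Left-continuous quantile of the leakage random variable:
`ubar ε_Z(δ) = inf {t ≥ 0 : ℙ(ℓ(Z) ≤ t) ≥ 1 - δ}`. -/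
def ubarEps {X Z : Type} [Fintype X] [Fintype Z] (Q : X → Z → ℝ) (δ : ℝ) : ℝ :=
  sInf {t : ℝ | 0 ≤ t ∧
    1 - δ ≤ ∑ z ∈ Finset.univ.filter (fun z => pml Q z ≤ t), margY Q z}

/-- The PML envelope: the supremum of the left-continuous leakage quantile over all
finite post-processings `Z` of `Y` (i.e., over all Markov chains `X - Y - Z`). -/
def pmlEnvelope {X Y : Type} [Fintype X] [Fintype Y] (P : X → Y → ℝ) (δ : ℝ) : ℝ :=
  sSup {e : ℝ | ∃ (n : ℕ) (K : Y → Fin n → ℝ),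
    IsKernel K ∧ e = ubarEps (pushKernel P K) δ}

section Helpers
variable {X Y Z : Type} [Fintype X] [Fintype Y] [Fintype Z]

lemma margY_pushKernel (P : X → Y → ℝ) (K : Y → Z → ℝ) (z : Z) :
    margY (pushKernel P K) z = ∑ y, margY P y * K y z := by
  simp only [margY, pushKernel, Finset.sum_mul]
  rw [Finset.sum_comm]

lemma margX_pushKernel (P : X → Y → ℝ) (K : Y → Z → ℝ)
    (hK : ∀ y, ∑ z, K y z = 1) (x : X) :
    margX (pushKernel P K) x = margX P x := by
  simp only [margX, pushKernel]
  rw [Finset.sum_comm]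
  simp [← Finset.mul_sum, hK]

lemma sum_margY_pushKernel (P : X → Y → ℝ) (K : Y → Z → ℝ)
    (hK : ∀ y, ∑ z, K y z = 1) :
    ∑ z, margY (pushKernel P K) z = ∑ y, margY P y := by
  simp only [margY_pushKernel]
  rw [Finset.sum_comm]
  simp [← Finset.mul_sum, hK]

lemma pml_ge [Nonempty X] (Q : X → Z → ℝ) (z : Z) (x₀ : X)
    (hm : 0 < margY Q z) (hc : 0 < condYX Q x₀ z) :
    Real.log (condYX Q x₀ z / margY Q z) ≤ pml Q z := by
  have hle : condYX Q x₀ z ≤ ⨆ x, condYX Q x z :=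
    le_ciSup (f := fun x => condYX Q x z) ((Set.finite_range _).bddAbove) x₀
  have h1 : 0 < condYX Q x₀ z / margY Q z := div_pos hc hm
  apply Real.log_le_log h1
  gcongr

lemma ubar_ge (Q : X → Z → ℝ) (δ τ : ℝ) (hδ : 0 ≤ δ)
    (hnn : ∀ z, 0 ≤ margY Q z) (htot : ∑ z, margY Q z = 1)
    (t₀ : ℝ) (ht₀ : 0 ≤ t₀) (ht₀' : ∀ z, pml Q z ≤ t₀)
    (T : Finset Z) (hT : ∀ z ∈ T, τ ≤ pml Q z)
    (hm : δ < ∑ z ∈ T, margY Q z) :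
    τ ≤ ubarEps Q δ := by
  apply le_csInf
  · refine ⟨t₀, ht₀, ?_⟩
    have : Finset.univ.filter (fun z => pml Q z ≤ t₀) = Finset.univ :=
      Finset.filter_true_of_mem (fun z _ => ht₀' z)
    rw [this, htot]; linarith
  · rintro t ⟨ht0, hts⟩
    by_contra hlt
    push_neg at hlt
    have hsub : Finset.univ.filter (fun z => pml Q z ≤ t) ⊆ Tᶜ := by
      intro z hz
      simp only [Finset.mem_filter, Finset.mem_univ, true_and] at hz
      simp only [Finset.mem_compl]
      intro hzT
      exact absurd (le_trans (hT z hzT) hz) (not_le.mpr hlt)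
    have h2 : ∑ z ∈ Finset.univ.filter (fun z => pml Q z ≤ t), margY Q z
        ≤ ∑ z ∈ Tᶜ, margY Q z :=
      Finset.sum_le_sum_of_subset_of_nonneg hsub (fun z _ _ => hnn z)
    have h3 : ∑ z ∈ T, margY Q z + ∑ z ∈ Tᶜ, margY Q z = 1 := by
      rw [Finset.sum_add_sum_compl, htot]
    linarith

lemma ubar_le (Q : X → Z → ℝ) (δ C : ℝ) (hC : 0 ≤ C)
    (h : 1 - δ ≤ ∑ z ∈ Finset.univ.filter (fun z => pml Q z ≤ C), margY Q z) :
    ubarEps Q δ ≤ C :=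
  csInf_le ⟨0, fun t ht => ht.1⟩ ⟨hC, h⟩

end Helpers

lemma aux_eta (A B C D bnd ε : ℝ) (hA : 0 < A) (hB : 0 < B) (hC : 0 ≤ C) (hD : 0 < D)
    (hbnd : 0 < bnd) (hε : 0 < ε) :
    ∃ η : ℝ, 0 < η ∧ η ≤ bnd ∧
      Real.log (A / B) - ε ≤ Real.log ((A + η * C) / (B + η * D)) := by
  set s := Real.exp (-ε) with hs
  have hs1 : s < 1 := by
    rw [hs]; rw [Real.exp_lt_one_iff]; linarith
  have hs0 : 0 < s := Real.exp_pos _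
  refine ⟨min bnd (B * (1 - s) / D),
    lt_min hbnd (div_pos (mul_pos hB (by linarith)) hD), min_le_left _ _, ?_⟩
  set η := min bnd (B * (1 - s) / D) with hη
  have hη0 : 0 < η := lt_min hbnd (div_pos (mul_pos hB (by linarith)) hD)
  have hη2 : η * D ≤ B * (1 - s) := by
    rw [← le_div_iff₀ hD]
    exact min_le_right _ _
  have hden : 0 < B + η * D := by positivity
  have key : A * s / B ≤ (A + η * C) / (B + η * D) := by
    rw [div_le_div_iff₀ hB hden]
    nlinarith [mul_nonneg (mul_nonneg hη0.le hC) hB.le,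
      mul_le_mul_of_nonneg_left hη2 (mul_nonneg hA.le hs0.le),
      mul_le_mul_of_nonneg_right hs1.le
        (mul_nonneg hA.le (by nlinarith : (0:ℝ) ≤ B * (1 - s)))]
  have h1 : Real.log (A * s / B) = Real.log (A / B) - ε := by
    rw [mul_comm A s, mul_div_assoc, Real.log_mul hs0.ne' (by positivity), hs,
      Real.log_exp]
    ring
  rw [← h1]
  exact Real.log_le_log (by positivity) key

lemma sum_filter_val_lt {k m : ℕ} (hm : m ≤ k) (f : Fin k → ℝ) (g : ℕ → ℝ)
    (hfg : ∀ z : Fin k, z.val < m → f z = g z.val) :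
    ∑ z ∈ Finset.univ.filter (fun z : Fin k => z.val < m), f z
      = ∑ j ∈ Finset.range m, g j := by
  calc ∑ z ∈ Finset.univ.filter (fun z : Fin k => z.val < m), f z
      = ∑ z : Fin k, if z.val < m then f z else 0 := Finset.sum_filter _ _
    _ = ∑ z : Fin k, (fun j => if j < m then g j else 0) z.val := by
        refine Finset.sum_congr rfl fun z _ => ?_
        by_cases h : z.val < m
        · simp only [h, if_true]; exact hfg z h
        · simp [h]
    _ = ∑ j ∈ Finset.range k, (if j < m then g j else 0) := by
        exact Fin.sum_univ_eq_sum_range (fun j => if j < m then g j else 0) k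
    _ = ∑ j ∈ Finset.range m, g j := by
        rw [← Finset.sum_filter]
        congr 1
        ext j
        simp only [Finset.mem_filter, Finset.mem_range]
        omega

def kerRow (k y₀ : ℕ) (r : ℕ → ℝ) : Fin k → Fin k → ℝ :=
  fun y z => if y.val = y₀ then r z.val else if z = y then 1 else 0

lemma kerRow_isKernel {k y₀ : ℕ} {r : ℕ → ℝ} (hr : ∀ j, 0 ≤ r j)
    (hsum : ∑ j ∈ Finset.range k, r j = 1) : IsKernel (kerRow k y₀ r) := by
  constructor
  · intro y z
    unfold kerRow
    split_ifs <;> simp [hr]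
  · intro y
    unfold kerRow
    by_cases h : y.val = y₀
    · simp only [h, if_true]
      rw [Fin.sum_univ_eq_sum_range r k]
      exact hsum
    · simp [h]

lemma sum_mul_kerRow {k y₀ : ℕ} (hy₀ : y₀ < k) (r : ℕ → ℝ) (g : Fin k → ℝ) (z : Fin k) :
    ∑ y, g y * kerRow k y₀ r y z
      = g ⟨y₀, hy₀⟩ * r z.val + (if z.val = y₀ then 0 else g z) := by
  set w : Fin k := ⟨y₀, hy₀⟩ with hw
  rw [← Finset.add_sum_erase _ _ (Finset.mem_univ w)]
  have h1 : ∀ y ∈ Finset.univ.erase w, g y * kerRow k y₀ r y z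
      = if z = y then g y else 0 := by
    intro y hy
    have hne : y ≠ w := Finset.ne_of_mem_erase hy
    have hv : ¬ y.val = y₀ := fun h => hne (Fin.ext h)
    simp [kerRow, hv, mul_ite]
  rw [Finset.sum_congr rfl h1]
  have h2 : ∑ y ∈ Finset.univ.erase w, (if z = y then g y else 0)
      = if z ∈ Finset.univ.erase w then g z else 0 := Finset.sum_ite_eq _ _ _
  rw [h2]
  have h3 : g w * kerRow k y₀ r w z = g w * r z.val := by
    simp [kerRow, hw]
  rw [h3]
  congr 1
  have h4 : (z ∈ Finset.univ.erase w) ↔ ¬ (z.val = y₀) := by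
    simp [Finset.mem_erase, Fin.ext_iff, hw]
  by_cases h : z.val = y₀
  · simp [h, h4]
  · simp only [h, if_false]
    rw [if_pos (h4.mpr h)]


lemma pml_push_le {k m : ℕ} (hk0 : 0 < k) (Pm : Fin k → Fin k → ℝ) (p q : ℕ → ℝ) (C : ℝ)
    (hC1 : 1 ≤ C)
    (hPnn : ∀ x y, 0 ≤ Pm x y)
    (hPx : ∀ x, margX Pm x = p x.val)
    (hpk : ∀ i, i < k → 0 < p i)
    (hPy : ∀ y, margY Pm y = q y.val)
    (hqnn : ∀ j, j < k → 0 ≤ q j)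
    (hPle : ∀ x y : Fin k, Pm x y ≤ p x.val * (C * q y.val))
    (K : Fin k → Fin m → ℝ) (hK : IsKernel K) (z : Fin m) :
    pml (pushKernel Pm K) z ≤ Real.log C := by
  have hC0 : 0 < C := lt_of_lt_of_le one_pos hC1
  have hlogC : 0 ≤ Real.log C := Real.log_nonneg hC1
  set Q := pushKernel Pm K with hQ
  have hmY : ∀ w, 0 ≤ margY Q w := by
    intro w
    rw [hQ, margY_pushKernel]
    exact Finset.sum_nonneg fun y _ =>
      mul_nonneg (by rw [hPy]; exact hqnn _ y.isLt) (hK.1 y w)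
  by_cases hz : margY Q z = 0
  · unfold pml; rw [hz, div_zero, Real.log_zero]; exact hlogC
  · have hzpos : 0 < margY Q z := lt_of_le_of_ne (hmY z) (Ne.symm hz)
    have hcond : ∀ x, condYX Q x z ≤ C * margY Q z := by
      intro x
      have hmQX : margX Q x = p x.val := by
        rw [hQ, margX_pushKernel Pm K hK.2, hPx]
      have hQle : Q x z ≤ p x.val * (C * margY Q z) := by
        rw [hQ, margY_pushKernel]
        calc pushKernel Pm K x z = ∑ y, Pm x y * K y z := rfl
          _ ≤ ∑ y, p x.val * (C * q y.val) * K y z :=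
            Finset.sum_le_sum fun y _ =>
              mul_le_mul_of_nonneg_right (hPle x y) (hK.1 y z)
          _ = p x.val * (C * ∑ y, margY Pm y * K y z) := by
            rw [Finset.mul_sum, Finset.mul_sum]
            refine Finset.sum_congr rfl fun y _ => ?_
            rw [hPy]; ring
      unfold condYX
      rw [hmQX, div_le_iff₀ (hpk x.val x.isLt)]
      calc Q x z ≤ p x.val * (C * margY Q z) := hQle
        _ = C * margY Q z * p x.val := by ring
    have hcnn : ∀ x, 0 ≤ condYX Q x z := by
      intro x
      unfold condYX
      apply div_nonneg _ (by rw [hQ, margX_pushKernel Pm K hK.2, hPx]; exact (hpk x.val x.isLt).le)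
      rw [hQ]
      exact Finset.sum_nonneg fun y _ => mul_nonneg (hPnn x y) (hK.1 y z)
    haveI : Nonempty (Fin k) := ⟨⟨0, hk0⟩⟩
    have hsup0 : 0 ≤ ⨆ x, condYX Q x z :=
      le_ciSup_of_le (f := fun x => condYX Q x z) ((Set.finite_range _).bddAbove)
        (Classical.arbitrary _) (hcnn _)
    have hsup : (⨆ x, condYX Q x z) ≤ C * margY Q z :=
      ciSup_le hcond
    have hv0 : 0 ≤ (⨆ x, condYX Q x z) / margY Q z := div_nonneg hsup0 hzpos.le
    unfold pml
    rcases eq_or_lt_of_le hv0 with hv | hv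
    · rw [← hv, Real.log_zero]; exact hlogC
    · have hle : (⨆ x, condYX Q x z) / margY Q z ≤ C := by
        rw [div_le_iff₀ hzpos]; exact hsup
      exact Real.log_le_log hv hle

lemma keyB_kernel {k n : ℕ} (hn1 : 1 ≤ n) (hnk : n < k)
    (p q : ℕ → ℝ) (α β δ G₀ : ℝ)
    (hβ0 : 0 < β) (hβα : β < α)
    (hpk : ∀ i, i < k → 0 < p i)
    (hq0 : ∀ j, j < k → 0 < q j)
    (hqmono : ∀ i j, i ≤ j → j < k → q i ≤ q j)
    (hqsumk : ∑ j ∈ Finset.range k, q j = 1)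
    (Pm : Fin k → Fin k → ℝ)
    (hPx : ∀ x, margX Pm x = p x.val)
    (hPdiag : ∀ x : Fin k, Pm x x = p x.val * α)
    (hPoff : ∀ x y : Fin k, x ≠ y → Pm x y = p x.val * β)
    (hPy : ∀ y, margY Pm y = q y.val)
    (hG1 : G₀ ≤ 1)
    (hδS : (∑ j ∈ Finset.range n, q j) < δ)
    (hδ0 : 0 < δ)
    (hmass : δ < (∑ j ∈ Finset.range n, q j) + G₀ * q n)
    (hcok : ((n:ℝ) * α + G₀ * β) * q (n-1)
      ≤ α * ((∑ j ∈ Finset.range n, q j) + G₀ * q n))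
    (t₀ : ℝ) (ht₀0 : 0 ≤ t₀)
    (ht₀ : ∀ (K : Fin k → Fin k → ℝ), IsKernel K →
      ∀ z, pml (pushKernel Pm K) z ≤ t₀) :
    ∃ K : Fin k → Fin k → ℝ, IsKernel K ∧
      Real.log (((n:ℝ) * α + G₀ * β) / ((∑ j ∈ Finset.range n, q j) + G₀ * q n))
        ≤ ubarEps (pushKernel Pm K) δ := by
  haveI : Nonempty (Fin k) := ⟨⟨0, by omega⟩⟩
  set S : ℝ := ∑ j ∈ Finset.range n, q j with hS
  have hα0 : 0 < α := lt_trans hβ0 hβα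
  have hqn : 0 < q n := hq0 n hnk
  have hqn1 : 0 < q (n-1) := hq0 _ (by omega)
  have hqmn : q (n-1) ≤ q n := hqmono _ _ (by omega) hnk
  have hS0 : 0 < S := Finset.sum_pos
    (fun j hj => hq0 j (lt_of_lt_of_le (Finset.mem_range.mp hj) hnk.le))
    (Finset.nonempty_range_iff.mpr (by omega))
  have hSn : S ≤ n * q n := by
    rw [hS]
    calc ∑ j ∈ Finset.range n, q j ≤ ∑ j ∈ Finset.range n, q n :=
      Finset.sum_le_sum (fun j hj => hqmono j n (Finset.mem_range.mp hj).le hnk)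
    _ = n * q n := by rw [Finset.sum_const, Finset.card_range, nsmul_eq_mul]
  have hn1' : (1:ℝ) ≤ (n:ℝ) := by exact_mod_cast hn1
  have hG0 : 0 < G₀ := by
    rcases lt_or_ge 0 G₀ with h | h
    · exact h
    · exfalso
      have : G₀ * q n ≤ 0 := mul_nonpos_of_nonpos_of_nonneg h hqn.le
      linarith
  have hden : 0 < S + G₀ * q n := by
    have := mul_pos hG0 hqn; linarith
  have hnum : 0 < (n:ℝ) * α + G₀ * β := by
    have h1 : α ≤ (n:ℝ) * α := by
      have := mul_le_mul_of_nonneg_right hn1' hα0.le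
      linarith
    have := mul_pos hG0 hβ0
    linarith
  set Λ : ℝ := ((n:ℝ) * α + G₀ * β) / (S + G₀ * q n) with hΛ
  have hΛ0 : 0 < Λ := div_pos hnum hden
  have hΛe : Λ * (S + G₀ * q n) = (n:ℝ) * α + G₀ * β :=
    div_mul_cancel₀ _ hden.ne'
  have hΛβ : β < Λ * q n := by
    rw [hΛ, div_mul_eq_mul_div, lt_div_iff₀ hden]
    have h1 : β * S ≤ β * ((n:ℝ) * q n) := mul_le_mul_of_nonneg_left hSn hβ0.le
    have h2 : β * ((n:ℝ) * q n) < α * ((n:ℝ) * q n) :=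
      mul_lt_mul_of_pos_right hβα (by positivity)
    linarith [h1, h2]
  have hΛqnβ : 0 < Λ * q n - β := by linarith
  have hΛα1 : Λ * q (n-1) ≤ α := by
    rw [hΛ, div_mul_eq_mul_div, div_le_iff₀ hden]
    linarith [hcok]
  set c : ℕ → ℝ := fun j => (α - Λ * q j) / (Λ * q n - β) with hc
  have hc0 : ∀ j, j < n → 0 ≤ c j := by
    intro j hj
    apply div_nonneg _ hΛqnβ.le
    have h1 : q j ≤ q (n-1) := hqmono j (n-1) (by omega) (by omega)
    have h2 : Λ * q j ≤ Λ * q (n-1) := mul_le_mul_of_nonneg_left h1 hΛ0.le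
    linarith
  have hcle : ∀ j, c j * (Λ * q n - β) = α - Λ * q j := fun j =>
    div_mul_cancel₀ _ hΛqnβ.ne'
  have hcsum : ∑ j ∈ Finset.range n, c j = G₀ := by
    rw [hc]
    simp only
    rw [← Finset.sum_div, div_eq_iff hΛqnβ.ne', Finset.sum_sub_distrib,
      Finset.sum_const, Finset.card_range, ← Finset.mul_sum, nsmul_eq_mul, ← hS]
    linarith [hΛe]
  set r : ℕ → ℝ := fun j => if j < n then c j else if j = n then 1 - G₀ else 0
    with hr
  have hr0 : ∀ j, 0 ≤ r j := by
    intro j; rw [hr]; simp only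
    split_ifs with h1 h2
    · exact hc0 j h1
    · linarith
    · exact le_refl 0
  have hrval : ∀ j, j < n → r j = c j := by
    intro j hj; rw [hr]; simp only [hj, if_true]
  have hrn : r n = 1 - G₀ := by
    rw [hr]; simp
  have hrsum : ∑ j ∈ Finset.range k, r j = 1 := by
    have hsub : ∑ j ∈ Finset.range k, r j = ∑ j ∈ Finset.range (n+1), r j := by
      symm
      apply Finset.sum_subset (Finset.range_subset_range.mpr (by omega))
      intro j hj hj2
      rw [hr]
      simp only [Finset.mem_range] at hj hj2
      have h1 : ¬ j < n := by omega
      have h2 : ¬ j = n := by omega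
      simp [h1, h2]
    rw [hsub, Finset.sum_range_succ,
      Finset.sum_congr rfl (fun j hj => hrval j (Finset.mem_range.mp hj)),
      hcsum, hrn]
    ring
  set K := kerRow k n r with hKdef
  have hK : IsKernel K := kerRow_isKernel hr0 hrsum
  set Q := pushKernel Pm K with hQ
  have hmY : ∀ z : Fin k, margY Q z
      = q n * r z.val + (if z.val = n then 0 else q z.val) := by
    intro z
    rw [hQ, margY_pushKernel, hKdef, sum_mul_kerRow hnk r (margY Pm) z, hPy]
    by_cases hz : z.val = n
    · simp [hz]
    · simp only [hz, if_false, hPy z]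
  have hmYnn : ∀ z : Fin k, 0 ≤ margY Q z := by
    intro z
    rw [hmY z]
    have h1 : 0 ≤ q n * r z.val := mul_nonneg hqn.le (hr0 _)
    by_cases hz : z.val = n
    · simpa [hz] using mul_nonneg hqn.le (hr0 n)
    · simp only [hz, if_false]
      have := (hq0 z.val z.isLt).le
      linarith
  have htotQ : ∑ z, margY Q z = 1 := by
    rw [hQ, sum_margY_pushKernel Pm K hK.2,
      Finset.sum_congr rfl (fun y _ => hPy y)]
    rw [Fin.sum_univ_eq_sum_range (fun j => q j) k]
    exact hqsumk
  have hQxx : ∀ z : Fin k, z.val < n →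
      condYX Q z z = α + c z.val * β := by
    intro z hz
    have hzn : ¬ z.val = n := by omega
    have hQval : Q z z = p z.val * α + p z.val * β * c z.val := by
      rw [hQ]
      show (∑ y, Pm z y * K y z) = _
      rw [hKdef, sum_mul_kerRow hnk r (Pm z) z]
      rw [hrval z.val hz]
      simp only [hzn, if_false]
      rw [hPdiag z, hPoff z ⟨n, hnk⟩ (by
        intro h
        exact hzn (by rw [h]))]
      ring
    unfold condYX
    rw [hQval]
    have hmm : margX Q z = p z.val := by
      rw [hQ, margX_pushKernel Pm K hK.2, hPx]
    rw [hmm]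
    field_simp [(hpk z.val z.isLt).ne']
  have hpmlT : ∀ z : Fin k, z.val < n → Real.log Λ ≤ pml Q z := by
    intro z hz
    have hzn : ¬ z.val = n := by omega
    have hmz : margY Q z = q z.val + c z.val * q n := by
      rw [hmY z, hrval z.val hz]
      simp only [hzn, if_false]
      ring
    have hmz0 : 0 < margY Q z := by
      rw [hmz]
      have h1 := hc0 z.val hz
      have h2 := hq0 z.val z.isLt
      linarith [mul_nonneg h1 hqn.le, h2]
    have hcond := hQxx z hz
    have hratio : α + c z.val * β = Λ * margY Q z := by
      rw [hmz]
      have h1 := hcle z.val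
      ring_nf
      ring_nf at h1
      linarith [h1]
    have hcpos : 0 < condYX Q z z := by
      rw [hcond]
      have := mul_nonneg (hc0 z.val hz) hβ0.le
      linarith
    have hdv : condYX Q z z / margY Q z = Λ := by
      rw [hcond, hratio, mul_div_assoc, div_self hmz0.ne', mul_one]
    have := pml_ge Q z z hmz0 hcpos
    rw [hdv] at this
    exact this
  refine ⟨K, hK, ?_⟩
  have hmass' : ∑ z ∈ Finset.univ.filter (fun z : Fin k => z.val < n), margY Q z
      = S + G₀ * q n := by
    rw [sum_filter_val_lt hnk.le _ (fun j => q j + c j * q n) (by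
      intro z hz
      rw [hmY z, hrval z.val hz]
      have hzn : ¬ z.val = n := by omega
      simp only [hzn, if_false]
      ring)]
    rw [Finset.sum_add_distrib, ← Finset.sum_mul, hcsum, ← hS]
  apply ubar_ge Q δ _ hδ0.le hmYnn htotQ t₀ ht₀0 (ht₀ K hK)
    (Finset.univ.filter (fun z : Fin k => z.val < n))
    (fun z hz => hpmlT z (Finset.mem_filter.mp hz).2)
  rw [hmass']
  exact hmass


lemma keyC_kernel {k n : ℕ} (hn1 : 1 ≤ n) (hnk : n < k)
    (p q : ℕ → ℝ) (α β δ G₀ : ℝ)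
    (hβ0 : 0 < β) (hβα : β < α)
    (hpk : ∀ i, i < k → 0 < p i)
    (hq0 : ∀ j, j < k → 0 < q j)
    (hqmono : ∀ i j, i ≤ j → j < k → q i ≤ q j)
    (hqsumk : ∑ j ∈ Finset.range k, q j = 1)
    (Pm : Fin k → Fin k → ℝ)
    (hPx : ∀ x, margX Pm x = p x.val)
    (hPdiag : ∀ x : Fin k, Pm x x = p x.val * α)
    (hPoff : ∀ x y : Fin k, x ≠ y → Pm x y = p x.val * β)
    (hPy : ∀ y, margY Pm y = q y.val)
    (hG0 : 0 ≤ G₀) (hG1 : G₀ < 1)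
    (hδ0 : 0 < δ)
    (hmassC : δ < (∑ j ∈ Finset.range n, q j) + q n)
    (hcok : ((n:ℝ) * α + G₀ * β) * q (n-1)
      ≤ α * ((∑ j ∈ Finset.range n, q j) + G₀ * q n))
    (hqnok : ((n:ℝ) * α + G₀ * β) * q n
      ≤ α * ((∑ j ∈ Finset.range n, q j) + G₀ * q n))
    (t₀ : ℝ) (ht₀0 : 0 ≤ t₀)
    (ht₀ : ∀ (K : Fin k → Fin k → ℝ), IsKernel K →
      ∀ z, pml (pushKernel Pm K) z ≤ t₀) :
    ∃ K : Fin k → Fin k → ℝ, IsKernel K ∧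
      Real.log (((n:ℝ) * α + G₀ * β) / ((∑ j ∈ Finset.range n, q j) + G₀ * q n))
        ≤ ubarEps (pushKernel Pm K) δ := by
  haveI : Nonempty (Fin k) := ⟨⟨0, by omega⟩⟩
  set S : ℝ := ∑ j ∈ Finset.range n, q j with hS
  have hα0 : 0 < α := lt_trans hβ0 hβα
  have hqn : 0 < q n := hq0 n hnk
  have hqn1 : 0 < q (n-1) := hq0 _ (by omega)
  have hqmn : q (n-1) ≤ q n := hqmono _ _ (by omega) hnk
  have hS0 : 0 < S := Finset.sum_pos
    (fun j hj => hq0 j (lt_of_lt_of_le (Finset.mem_range.mp hj) hnk.le))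
    (Finset.nonempty_range_iff.mpr (by omega))
  have hSn : S ≤ n * q n := by
    rw [hS]
    calc ∑ j ∈ Finset.range n, q j ≤ ∑ j ∈ Finset.range n, q n :=
      Finset.sum_le_sum (fun j hj => hqmono j n (Finset.mem_range.mp hj).le hnk)
    _ = n * q n := by rw [Finset.sum_const, Finset.card_range, nsmul_eq_mul]
  have hn1' : (1:ℝ) ≤ (n:ℝ) := by exact_mod_cast hn1
  have hden : 0 < S + G₀ * q n := by
    have := mul_nonneg hG0 hqn.le; linarith
  have hnum : 0 < (n:ℝ) * α + G₀ * β := by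
    have h1 : α ≤ (n:ℝ) * α := by
      have := mul_le_mul_of_nonneg_right hn1' hα0.le
      linarith
    have := mul_nonneg hG0 hβ0.le
    linarith
  set Λ : ℝ := ((n:ℝ) * α + G₀ * β) / (S + G₀ * q n) with hΛ
  have hΛ0 : 0 < Λ := div_pos hnum hden
  have hΛe : Λ * (S + G₀ * q n) = (n:ℝ) * α + G₀ * β :=
    div_mul_cancel₀ _ hden.ne'
  have hΛβ : β < Λ * q n := by
    rw [hΛ, div_mul_eq_mul_div, lt_div_iff₀ hden]
    have h1 : β * S ≤ β * ((n:ℝ) * q n) := mul_le_mul_of_nonneg_left hSn hβ0.le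
    have h2 : β * ((n:ℝ) * q n) < α * ((n:ℝ) * q n) :=
      mul_lt_mul_of_pos_right hβα (by positivity)
    linarith [h1, h2]
  have hΛqnβ : 0 < Λ * q n - β := by linarith
  have hΛα1 : Λ * q (n-1) ≤ α := by
    rw [hΛ, div_mul_eq_mul_div, div_le_iff₀ hden]
    linarith [hcok]
  set c : ℕ → ℝ := fun j => (α - Λ * q j) / (Λ * q n - β) with hc
  have hc0 : ∀ j, j < n → 0 ≤ c j := by
    intro j hj
    apply div_nonneg _ hΛqnβ.le
    have h1 : q j ≤ q (n-1) := hqmono j (n-1) (by omega) (by omega)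
    have h2 : Λ * q j ≤ Λ * q (n-1) := mul_le_mul_of_nonneg_left h1 hΛ0.le
    linarith
  have hcle : ∀ j, c j * (Λ * q n - β) = α - Λ * q j := fun j =>
    div_mul_cancel₀ _ hΛqnβ.ne'
  have hcsum : ∑ j ∈ Finset.range n, c j = G₀ := by
    rw [hc]
    simp only
    rw [← Finset.sum_div, div_eq_iff hΛqnβ.ne', Finset.sum_sub_distrib,
      Finset.sum_const, Finset.card_range, ← Finset.mul_sum, nsmul_eq_mul, ← hS]
    linarith [hΛe]
  set r : ℕ → ℝ := fun j => if j < n then c j else if j = n then 1 - G₀ else 0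
    with hr
  have hr0 : ∀ j, 0 ≤ r j := by
    intro j; rw [hr]; simp only
    split_ifs with h1 h2
    · exact hc0 j h1
    · linarith
    · exact le_refl 0
  have hG1' : (0:ℝ) < 1 - G₀ := by linarith
  have hrval : ∀ j, j < n → r j = c j := by
    intro j hj; rw [hr]; simp only [hj, if_true]
  have hrn : r n = 1 - G₀ := by
    rw [hr]; simp
  have hrsum : ∑ j ∈ Finset.range k, r j = 1 := by
    have hsub : ∑ j ∈ Finset.range k, r j = ∑ j ∈ Finset.range (n+1), r j := by
      symm
      apply Finset.sum_subset (Finset.range_subset_range.mpr (by omega))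
      intro j hj hj2
      rw [hr]
      simp only [Finset.mem_range] at hj hj2
      have h1 : ¬ j < n := by omega
      have h2 : ¬ j = n := by omega
      simp [h1, h2]
    rw [hsub, Finset.sum_range_succ,
      Finset.sum_congr rfl (fun j hj => hrval j (Finset.mem_range.mp hj)),
      hcsum, hrn]
    ring
  set K := kerRow k n r with hKdef
  have hK : IsKernel K := kerRow_isKernel hr0 hrsum
  set Q := pushKernel Pm K with hQ
  have hmY : ∀ z : Fin k, margY Q z
      = q n * r z.val + (if z.val = n then 0 else q z.val) := by
    intro z
    rw [hQ, margY_pushKernel, hKdef, sum_mul_kerRow hnk r (margY Pm) z, hPy]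
    by_cases hz : z.val = n
    · simp [hz]
    · simp only [hz, if_false, hPy z]
  have hmYnn : ∀ z : Fin k, 0 ≤ margY Q z := by
    intro z
    rw [hmY z]
    have h1 : 0 ≤ q n * r z.val := mul_nonneg hqn.le (hr0 _)
    by_cases hz : z.val = n
    · simpa [hz] using mul_nonneg hqn.le (hr0 n)
    · simp only [hz, if_false]
      have := (hq0 z.val z.isLt).le
      linarith
  have htotQ : ∑ z, margY Q z = 1 := by
    rw [hQ, sum_margY_pushKernel Pm K hK.2,
      Finset.sum_congr rfl (fun y _ => hPy y)]
    rw [Fin.sum_univ_eq_sum_range (fun j => q j) k]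
    exact hqsumk
  have hQxx : ∀ z : Fin k, z.val < n →
      condYX Q z z = α + c z.val * β := by
    intro z hz
    have hzn : ¬ z.val = n := by omega
    have hQval : Q z z = p z.val * α + p z.val * β * c z.val := by
      rw [hQ]
      show (∑ y, Pm z y * K y z) = _
      rw [hKdef, sum_mul_kerRow hnk r (Pm z) z]
      rw [hrval z.val hz]
      simp only [hzn, if_false]
      rw [hPdiag z, hPoff z ⟨n, hnk⟩ (by
        intro h
        exact hzn (by rw [h]))]
      ring
    unfold condYX
    rw [hQval]
    have hmm : margX Q z = p z.val := by
      rw [hQ, margX_pushKernel Pm K hK.2, hPx]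
    rw [hmm]
    field_simp [(hpk z.val z.isLt).ne']
  have hpmlT : ∀ z : Fin k, z.val < n → Real.log Λ ≤ pml Q z := by
    intro z hz
    have hzn : ¬ z.val = n := by omega
    have hmz : margY Q z = q z.val + c z.val * q n := by
      rw [hmY z, hrval z.val hz]
      simp only [hzn, if_false]
      ring
    have hmz0 : 0 < margY Q z := by
      rw [hmz]
      have h1 := hc0 z.val hz
      have h2 := hq0 z.val z.isLt
      linarith [mul_nonneg h1 hqn.le, h2]
    have hcond := hQxx z hz
    have hratio : α + c z.val * β = Λ * margY Q z := by
      rw [hmz]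
      have h1 := hcle z.val
      ring_nf
      ring_nf at h1
      linarith [h1]
    have hcpos : 0 < condYX Q z z := by
      rw [hcond]
      have := mul_nonneg (hc0 z.val hz) hβ0.le
      linarith
    have hdv : condYX Q z z / margY Q z = Λ := by
      rw [hcond, hratio, mul_div_assoc, div_self hmz0.ne', mul_one]
    have := pml_ge Q z z hmz0 hcpos
    rw [hdv] at this
    exact this
  have hΛqn2 : Λ * q n ≤ α := by
    rw [hΛ, div_mul_eq_mul_div, div_le_iff₀ hden]
    linarith [hqnok]
  have hpmlZn : Real.log Λ ≤ pml Q ⟨n, hnk⟩ := by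
    have hvaln : (⟨n, hnk⟩ : Fin k).val = n := rfl
    have hmz : margY Q ⟨n, hnk⟩ = q n * (1 - G₀) := by
      rw [hmY ⟨n, hnk⟩, hvaln, hrn]
      simp
    have hmz0 : 0 < margY Q ⟨n, hnk⟩ := by
      rw [hmz]; exact mul_pos hqn hG1'
    have hQval : Q ⟨n, hnk⟩ ⟨n, hnk⟩ = p n * α * (1 - G₀) := by
      rw [hQ]
      show (∑ y, Pm ⟨n, hnk⟩ y * K y ⟨n, hnk⟩) = _
      rw [hKdef, sum_mul_kerRow hnk r (Pm ⟨n, hnk⟩) ⟨n, hnk⟩, hvaln, hrn,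
        hPdiag ⟨n, hnk⟩]
      simp only [if_pos rfl]
      show p n * α * (1 - G₀) + 0 = p n * α * (1 - G₀)
      ring
    have hcond : condYX Q ⟨n, hnk⟩ ⟨n, hnk⟩ = α * (1 - G₀) := by
      unfold condYX
      have hmm : margX Q ⟨n, hnk⟩ = p n := by
        rw [hQ, margX_pushKernel Pm K hK.2, hPx]
      rw [hQval, hmm]
      field_simp [(hpk n hnk).ne']
    have hcpos : 0 < condYX Q ⟨n, hnk⟩ ⟨n, hnk⟩ := by
      rw [hcond]; exact mul_pos hα0 hG1'
    have hdv : condYX Q ⟨n, hnk⟩ ⟨n, hnk⟩ / margY Q ⟨n, hnk⟩ = α / q n := by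
      rw [hcond, hmz]
      rw [mul_div_mul_right _ _ (by linarith : (1:ℝ) - G₀ ≠ 0)]
    have h1 := pml_ge Q ⟨n, hnk⟩ ⟨n, hnk⟩ hmz0 hcpos
    rw [hdv] at h1
    refine le_trans ?_ h1
    apply Real.log_le_log hΛ0
    rw [le_div_iff₀ hqn]
    linarith [hΛqn2]
  refine ⟨K, hK, ?_⟩
  have hmass' : ∑ z ∈ Finset.univ.filter (fun z : Fin k => z.val < n+1), margY Q z
      = S + q n := by
    rw [sum_filter_val_lt (by omega : n+1 ≤ k) _
      (fun j => if j < n then q j + c j * q n else q n * (1 - G₀)) (by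
      intro z hz
      by_cases h : z.val < n
      · have hzn' : ¬ z.val = n := by omega
        rw [hmY z, hrval z.val h]
        simp only [h, if_true, hzn', if_false]
        ring
      · have hzn' : z.val = n := by omega
        rw [hmY z, hzn', hrn]
        simp)]
    rw [Finset.sum_range_succ]
    have h1 : ∑ j ∈ Finset.range n, (if j < n then q j + c j * q n
        else q n * (1 - G₀)) = ∑ j ∈ Finset.range n, (q j + c j * q n) :=
      Finset.sum_congr rfl (fun j hj => by rw [if_pos (Finset.mem_range.mp hj)])
    rw [h1, Finset.sum_add_distrib, ← Finset.sum_mul, hcsum, ← hS]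
    simp only [lt_irrefl, if_false]
    ring
  apply ubar_ge Q δ _ hδ0.le hmYnn htotQ t₀ ht₀0 (ht₀ K hK)
    (Finset.univ.filter (fun z : Fin k => z.val < n+1))
    (fun z hz => by
      have hz' := (Finset.mem_filter.mp hz).2
      by_cases h : z.val < n
      · exact hpmlT z h
      · have h2 : z.val = n := by omega
        have h3 : z = ⟨n, hnk⟩ := Fin.ext h2
        rw [h3]; exact hpmlZn)
  rw [hmass']
  exact hmassC


lemma keyA_kernel {k n : ℕ} (hn1 : 1 ≤ n) (hnk1 : n + 1 < k)
    (p q : ℕ → ℝ) (α β δ σ : ℝ)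
    (hβ0 : 0 < β) (hβα : β < α)
    (hpk : ∀ i, i < k → 0 < p i)
    (hq0 : ∀ j, j < k → 0 < q j)
    (hqmono : ∀ i j, i ≤ j → j < k → q i ≤ q j)
    (hqsumk : ∑ j ∈ Finset.range k, q j = 1)
    (Pm : Fin k → Fin k → ℝ)
    (hPx : ∀ x, margX Pm x = p x.val)
    (hPdiag : ∀ x : Fin k, Pm x x = p x.val * α)
    (hPoff : ∀ x y : Fin k, x ≠ y → Pm x y = p x.val * β)
    (hPy : ∀ y, margY Pm y = q y.val)
    (hσ0 : 0 < σ) (hσ1 : σ ≤ 1)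
    (hδ0 : 0 < δ)
    (hδSn : δ ≤ (∑ j ∈ Finset.range n, q j) + q n)
    (t₀ : ℝ) (ht₀0 : 0 ≤ t₀)
    (ht₀ : ∀ (K : Fin k → Fin k → ℝ), IsKernel K →
      ∀ z, pml (pushKernel Pm K) z ≤ t₀) :
    ∃ K : Fin k → Fin k → ℝ, IsKernel K ∧
      Real.log ((α + σ * β) / (q n + σ * q (n+1)))
        ≤ ubarEps (pushKernel Pm K) δ := by
  haveI : Nonempty (Fin k) := ⟨⟨0, by omega⟩⟩
  have hnk : n < k := by omega
  set S : ℝ := ∑ j ∈ Finset.range n, q j with hS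
  have hα0 : 0 < α := lt_trans hβ0 hβα
  have hqn : 0 < q n := hq0 n hnk
  have hqn1 : 0 < q (n+1) := hq0 _ hnk1
  have hqnn1 : q n ≤ q (n+1) := hqmono _ _ (by omega) hnk1
  set τe : ℝ := (α + σ * β) / (q n + σ * q (n+1)) with hτe
  have hτden : 0 < q n + σ * q (n+1) := by linarith [mul_pos hσ0 hqn1, hqn]
  have hτnum : 0 < α + σ * β := by linarith [mul_pos hσ0 hβ0, hα0]
  have hτ0 : 0 < τe := div_pos hτnum hτden
  set r : ℕ → ℝ := fun j => if j = n then σ else if j = n+1 then 1 - σ else 0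
    with hr
  have hr0 : ∀ j, 0 ≤ r j := by
    intro j; rw [hr]; simp only
    split_ifs
    · exact hσ0.le
    · linarith
    · exact le_refl 0
  have hrsum : ∑ j ∈ Finset.range k, r j = 1 := by
    have h1 : ∀ j, r j
        = (if j = n then σ else 0) + (if j = n+1 then 1 - σ else 0) := by
      intro j; rw [hr]; simp only
      by_cases ha : j = n
      · simp [ha, (by omega : ¬ n = n + 1)]
      · by_cases hb : j = n+1 <;> simp [ha, hb]
    rw [Finset.sum_congr rfl (fun j _ => h1 j), Finset.sum_add_distrib,
      Finset.sum_ite_eq' (Finset.range k) n (fun _ => σ),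
      Finset.sum_ite_eq' (Finset.range k) (n+1) (fun _ => 1 - σ),
      if_pos (Finset.mem_range.mpr hnk), if_pos (Finset.mem_range.mpr hnk1)]
    ring
  set K := kerRow k (n+1) r with hKdef
  have hK : IsKernel K := kerRow_isKernel hr0 hrsum
  set Q := pushKernel Pm K with hQ
  have hmY : ∀ z : Fin k, margY Q z
      = q (n+1) * r z.val + (if z.val = n+1 then 0 else q z.val) := by
    intro z
    rw [hQ, margY_pushKernel, hKdef, sum_mul_kerRow hnk1 r (margY Pm) z, hPy]
    by_cases hz : z.val = n+1
    · simp [hz]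
    · simp only [hz, if_false, hPy z]
  have hmYnn : ∀ z : Fin k, 0 ≤ margY Q z := by
    intro z
    rw [hmY z]
    have h1 : 0 ≤ q (n+1) * r z.val := mul_nonneg hqn1.le (hr0 _)
    by_cases hz : z.val = n+1
    · simpa [hz] using mul_nonneg hqn1.le (hr0 (n+1))
    · simp only [hz, if_false]
      have := (hq0 z.val z.isLt).le
      linarith
  have htotQ : ∑ z, margY Q z = 1 := by
    rw [hQ, sum_margY_pushKernel Pm K hK.2,
      Finset.sum_congr rfl (fun y _ => hPy y)]
    rw [Fin.sum_univ_eq_sum_range (fun j => q j) k]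
    exact hqsumk
  have hpmlT : ∀ z : Fin k, z.val < n → Real.log τe ≤ pml Q z := by
    intro z hz
    have hz1 : ¬ z.val = n+1 := by omega
    have hz2 : ¬ z.val = n := by omega
    have hrz : r z.val = 0 := by rw [hr]; simp [hz2, hz1]
    have hmz : margY Q z = q z.val := by
      rw [hmY z, hrz]; simp [hz1]
    have hmz0 : 0 < margY Q z := by rw [hmz]; exact hq0 z.val z.isLt
    have hQval : Q z z = p z.val * α := by
      rw [hQ]
      show (∑ y, Pm z y * K y z) = _
      rw [hKdef, sum_mul_kerRow hnk1 r (Pm z) z, hrz, hPdiag z]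
      simp [hz1]
    have hcond : condYX Q z z = α := by
      unfold condYX
      have hmm : margX Q z = p z.val := by
        rw [hQ, margX_pushKernel Pm K hK.2, hPx]
      rw [hQval, hmm, mul_comm, mul_div_assoc,
        div_self (hpk z.val z.isLt).ne', mul_one]
    have hcpos : 0 < condYX Q z z := by rw [hcond]; exact hα0
    have h1 := pml_ge Q z z hmz0 hcpos
    rw [hcond, hmz] at h1
    refine le_trans ?_ h1
    apply Real.log_le_log hτ0
    rw [hτe, div_le_div_iff₀ hτden (hq0 z.val z.isLt)]
    have hqz : q z.val ≤ q n := hqmono z.val n hz.le hnk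
    have hqz0 : 0 ≤ q z.val := (hq0 z.val z.isLt).le
    have h2 : σ * (β * q z.val) ≤ σ * (α * q (n+1)) := by
      apply mul_le_mul_of_nonneg_left _ hσ0.le
      calc β * q z.val ≤ α * q z.val := mul_le_mul_of_nonneg_right hβα.le hqz0
      _ ≤ α * q (n+1) := mul_le_mul_of_nonneg_left (le_trans hqz hqnn1) hα0.le
    have h3 : α * q z.val ≤ α * q n := mul_le_mul_of_nonneg_left hqz hα0.le
    linarith [h2, h3]
  have hpmlZn : Real.log τe ≤ pml Q ⟨n, hnk⟩ := by
    have hvaln : (⟨n, hnk⟩ : Fin k).val = n := rfl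
    have hrn : r n = σ := by rw [hr]; simp
    have hmz : margY Q ⟨n, hnk⟩ = q n + σ * q (n+1) := by
      rw [hmY ⟨n, hnk⟩, hvaln, hrn]
      rw [if_neg (by omega : ¬ n = n+1)]
      ring
    have hmz0 : 0 < margY Q ⟨n, hnk⟩ := by rw [hmz]; exact hτden
    have hQval : Q ⟨n, hnk⟩ ⟨n, hnk⟩ = p n * (α + σ * β) := by
      rw [hQ]
      show (∑ y, Pm ⟨n, hnk⟩ y * K y ⟨n, hnk⟩) = _
      rw [hKdef, sum_mul_kerRow hnk1 r (Pm ⟨n, hnk⟩) ⟨n, hnk⟩, hvaln, hrn]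
      rw [hPoff ⟨n, hnk⟩ ⟨n+1, hnk1⟩ (by
        intro h
        rw [Fin.ext_iff] at h
        simp at h), hPdiag ⟨n, hnk⟩]
      rw [if_neg (by omega : ¬ n = n+1)]
      ring
    have hcond : condYX Q ⟨n, hnk⟩ ⟨n, hnk⟩ = α + σ * β := by
      unfold condYX
      have hmm : margX Q ⟨n, hnk⟩ = p n := by
        rw [hQ, margX_pushKernel Pm K hK.2, hPx]
      rw [hQval, hmm, mul_comm, mul_div_assoc, div_self (hpk n hnk).ne', mul_one]
    have hcpos : 0 < condYX Q ⟨n, hnk⟩ ⟨n, hnk⟩ := by rw [hcond]; exact hτnum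
    have h1 := pml_ge Q ⟨n, hnk⟩ ⟨n, hnk⟩ hmz0 hcpos
    rw [hcond, hmz] at h1
    exact h1
  refine ⟨K, hK, ?_⟩
  have hmass' : ∑ z ∈ Finset.univ.filter (fun z : Fin k => z.val < n+1), margY Q z
      = S + (q n + σ * q (n+1)) := by
    rw [sum_filter_val_lt (by omega : n+1 ≤ k) _
      (fun j => if j < n then q j else q n + σ * q (n+1)) (by
      intro z hz
      by_cases h : z.val < n
      · have hz1 : ¬ z.val = n+1 := by omega
        have hz2 : ¬ z.val = n := by omega
        have hrz : r z.val = 0 := by rw [hr]; simp [hz2, hz1]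
        rw [hmY z, hrz]
        simp [h, hz1]
      · have hzn' : z.val = n := by omega
        rw [hmY z, hzn']
        have hrn : r n = σ := by rw [hr]; simp
        rw [hrn, if_neg (by omega : ¬ n = n+1)]
        push_neg at h
        rw [if_neg (by omega : ¬ n < n)]
        ring)]
    rw [Finset.sum_range_succ]
    have h1 : ∑ j ∈ Finset.range n, (if j < n then q j else q n + σ * q (n+1))
        = ∑ j ∈ Finset.range n, q j :=
      Finset.sum_congr rfl (fun j hj => by rw [if_pos (Finset.mem_range.mp hj)])
    rw [h1, if_neg (by omega : ¬ n < n), ← hS]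
  apply ubar_ge Q δ _ hδ0.le hmYnn htotQ t₀ ht₀0 (ht₀ K hK)
    (Finset.univ.filter (fun z : Fin k => z.val < n+1))
    (fun z hz => by
      have hz' := (Finset.mem_filter.mp hz).2
      by_cases h : z.val < n
      · exact hpmlT z h
      · have h2 : z.val = n := by omega
        have h3 : z = ⟨n, hnk⟩ := Fin.ext h2
        rw [h3]; exact hpmlZn)
  rw [hmass']
  linarith [mul_pos hσ0 hqn1, hδSn]

/-- Lower bound on the PML envelope of the `k`-randomized response
mechanism. The prior `p` and the output marginal `q` are indexed by `ℕ`, with index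
`j ∈ {0, …, k-1}` corresponding to the paper's index `j+1 ∈ {1, …, k}`; thus the paper's
`q_N` is `q (N-1)`, its `q_{N-1}` is `q (N-2)`, and `Σ_{j=1}^{N-1} q_j` is
`∑ j ∈ Finset.range (N-1), q j`. Under the stated prior condition, for
`δ ∈ (q₁, 1)` with `Σ_{j=1}^{N-1} q_j < δ ≤ Σ_{j=1}^{N} q_j` and
`θ = (δ - Σ_{j=1}^{N-1} q_j)/q_N`, the PML envelope satisfies `ε_c(δ) ≥ h_δ(θ)`. -/
theorem pmlEnvelope_krr_lower_bound
    (k : ℕ) (hk : 2 ≤ k) (εr : ℝ) (hεr : 0 < εr)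
    (p : ℕ → ℝ) (hp : ∀ i, i < k → 0 < p i)
    (hpsum : ∑ i ∈ Finset.range k, p i = 1)
    (hmono : ∀ i j, i ≤ j → j < k → p i ≤ p j)
    (α β : ℝ)
    (hα : α = Real.exp εr / (Real.exp εr + k - 1))
    (hβ : β = 1 / (Real.exp εr + k - 1))
    (q : ℕ → ℝ) (hq : ∀ j, q j = β + (α - β) * p j)
    (δ : ℝ) (hδl : q 0 < δ) (hδu : δ < 1)
    (N : ℕ) (hN2 : 2 ≤ N) (hNk : N ≤ k)
    (hNl : ∑ j ∈ Finset.range (N - 1), q j < δ)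
    (hNu : δ ≤ ∑ j ∈ Finset.range N, q j)
    (θ : ℝ) (hθ : θ = (δ - ∑ j ∈ Finset.range (N - 1), q j) / q (N - 1))
    (hprior : p (N - 1) ≤
      (α * ∑ j ∈ Finset.range (N - 1), p j + β) / (((N : ℝ) - 2) * α + β))
    (θ₁ θ₂ : ℝ)
    (hθ₁ : θ₁ = α * (((N : ℝ) - 2) * q (N - 2) - ∑ j ∈ Finset.range (N - 2), q j)
        / (α * q (N - 1) - β * q (N - 2)))
    (hθ₂ : θ₂ = α * (((N : ℝ) - 1) * q (N - 1) - ∑ j ∈ Finset.range (N - 1), q j)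
        / (q (N - 1) * (α - β))) :
    (if θ ≤ θ₁ then Real.log (α / q (N - 2))
      else if θ ≤ θ₂ then Real.log ((((N : ℝ) - 1) * α + θ * β) / δ)
      else Real.log (α / q (N - 1)))
      ≤ pmlEnvelope (fun i j : Fin k => p i.val * (if j = i then α else β)) δ := by
  -- ## basic scalar facts
  have hE1 : 1 < Real.exp εr := by
    calc (1:ℝ) = Real.exp 0 := by simp
    _ < Real.exp εr := Real.exp_lt_exp.mpr hεr
  have hk2 : (2:ℝ) ≤ k := by exact_mod_cast hk
  have hdpos : 0 < Real.exp εr + k - 1 := by linarith [Real.exp_pos εr]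
  have hβ0 : 0 < β := by rw [hβ]; positivity
  have hβα : β < α := by
    rw [hα, hβ]
    exact (div_lt_div_iff_of_pos_right hdpos).mpr hE1
  have hα0 : 0 < α := lt_trans hβ0 hβα
  have hsum1 : α + ((k:ℝ) - 1) * β = 1 := by
    rw [hα, hβ]; field_simp; ring
  have hp1 : ∀ i, i < k → p i ≤ 1 := by
    intro i hi
    have h1 : p i ≤ ∑ j ∈ Finset.range k, p j :=
      Finset.single_le_sum (fun j hj => (hp j (Finset.mem_range.mp hj)).le)
        (Finset.mem_range.mpr hi)
    rw [hpsum] at h1; exact h1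
  have hq0 : ∀ j, j < k → 0 < q j := fun j hj => by
    rw [hq]
    have := mul_pos (by linarith : (0:ℝ) < α - β) (hp j hj)
    linarith
  have hqmono : ∀ i j, i ≤ j → j < k → q i ≤ q j := fun i j hij hj => by
    rw [hq, hq]
    have := mul_nonneg (by linarith : (0:ℝ) ≤ α - β)
      (sub_nonneg.mpr (hmono i j hij hj))
    linarith [this]
  have hqsumk : ∑ j ∈ Finset.range k, q j = 1 := by
    have h1 : ∑ j ∈ Finset.range k, q j
        = k * β + (α - β) * ∑ j ∈ Finset.range k, p j := by
      rw [Finset.sum_congr rfl (fun j _ => hq j), Finset.sum_add_distrib,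
        Finset.sum_const, Finset.card_range, ← Finset.mul_sum, nsmul_eq_mul]
    rw [h1, hpsum]; linarith [hsum1]
  -- ## index normalization
  obtain ⟨n, rfl⟩ : ∃ n, N = n + 1 := ⟨N - 1, by omega⟩
  have hn1 : 1 ≤ n := by omega
  have hnk : n < k := by omega
  have e1 : n + 1 - 1 = n := by omega
  have e2 : n + 1 - 2 = n - 1 := by omega
  rw [e1] at hNl hθ hprior hθ₂ hθ₁
  rw [e2] at hθ₁
  rw [e1, e2]
  -- ## derived quantities
  set S : ℝ := ∑ j ∈ Finset.range n, q j with hS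
  set Sp : ℝ := ∑ j ∈ Finset.range n, p j with hSp
  have hSq : S = n * β + (α - β) * Sp := by
    rw [hS, hSp, Finset.sum_congr rfl (fun j _ => hq j), Finset.sum_add_distrib,
      Finset.sum_const, Finset.card_range, ← Finset.mul_sum, nsmul_eq_mul]
  have hS0 : 0 < S := Finset.sum_pos
    (fun j hj => hq0 j (lt_of_lt_of_le (Finset.mem_range.mp hj) hnk.le))
    (Finset.nonempty_range_iff.mpr (by omega))
  have hqn : 0 < q n := hq0 n hnk
  have hqn1 : 0 < q (n-1) := hq0 _ (by omega)
  have hqmn : q (n-1) ≤ q n := hqmono _ _ (by omega) hnk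
  have hSd : δ = S + θ * q n := by
    rw [hθ]; field_simp; ring
  have hθ0 : 0 < θ := by
    rw [hθ]; exact div_pos (by linarith [hNl]) hqn
  have hrangeN : ∑ j ∈ Finset.range (n+1), q j = S + q n := Finset.sum_range_succ q n
  have hθ1e : θ ≤ 1 := by
    rw [hrangeN] at hNu
    have h1 : θ * q n ≤ 1 * q n := by linarith [hNu, hSd]
    exact le_of_mul_le_mul_right h1 hqn
  have hSn : S ≤ n * q n := by
    rw [hS]
    calc ∑ j ∈ Finset.range n, q j ≤ ∑ j ∈ Finset.range n, q n :=
      Finset.sum_le_sum (fun j hj => hqmono j n (Finset.mem_range.mp hj).le hnk)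
    _ = n * q n := by rw [Finset.sum_const, Finset.card_range, nsmul_eq_mul]
  have hSn1 : S ≤ n * q (n-1) := by
    rw [hS]
    calc ∑ j ∈ Finset.range n, q j ≤ ∑ j ∈ Finset.range n, q (n-1) :=
      Finset.sum_le_sum (fun j hj => hqmono j (n-1)
        (by have := Finset.mem_range.mp hj; omega) (by omega))
    _ = n * q (n-1) := by rw [Finset.sum_const, Finset.card_range, nsmul_eq_mul]
  have hD1 : 0 < α * q n - β * q (n-1) := by
    have h1 : β * q (n-1) < α * q (n-1) := mul_lt_mul_of_pos_right hβα hqn1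
    have h2 : α * q (n-1) ≤ α * q n := mul_le_mul_of_nonneg_left hqmn hα0.le
    linarith
  have hD2 : 0 < q n * (α - β) := mul_pos hqn (by linarith)
  have hsplit : S = ∑ j ∈ Finset.range (n-1), q j + q (n-1) := by
    rw [hS]; conv_lhs => rw [show n = n - 1 + 1 by omega, Finset.sum_range_succ]
  have hn1' : (1:ℝ) ≤ (n:ℝ) := by exact_mod_cast hn1
  have hθ₁' : θ₁ * (α * q n - β * q (n-1)) = α * ((n:ℝ) * q (n-1) - S) := by
    rw [hθ₁, div_mul_cancel₀ _ hD1.ne']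
    have h1 : ∑ j ∈ Finset.range (n-1), q j = S - q (n-1) := by linarith [hsplit]
    rw [h1]
    push_cast
    ring
  have hθ₂' : θ₂ * (q n * (α - β)) = α * ((n:ℝ) * q n - S) := by
    rw [hθ₂, div_mul_cancel₀ _ hD2.ne']
    push_cast
    ring
  have hθ₂0 : 0 ≤ θ₂ := by
    have h1 : 0 ≤ α * ((n:ℝ) * q n - S) := mul_nonneg hα0.le (by linarith [hSn])
    have h2 : 0 * (q n * (α - β)) ≤ θ₂ * (q n * (α - β)) := by
      rw [zero_mul, hθ₂']; exact h1
    exact le_of_mul_le_mul_right h2 hD2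
  have hbrS : 0 ≤ (n:ℝ) * α * q n - β * S := by
    have h1 : β * S ≤ β * ((n:ℝ) * q n) := mul_le_mul_of_nonneg_left hSn hβ0.le
    have h2 : β * ((n:ℝ) * q n) ≤ α * ((n:ℝ) * q n) :=
      mul_le_mul_of_nonneg_right hβα.le
        (mul_nonneg (Nat.cast_nonneg n) hqn.le)
    linarith
  have hθ12 : θ₁ ≤ θ₂ := by
    have hprod : 0 ≤ α * ((q n - q (n-1)) * ((n:ℝ) * α * q n - β * S)) :=
      mul_nonneg hα0.le (mul_nonneg (sub_nonneg.mpr hqmn) hbrS)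
    have hkey : α * ((n:ℝ) * q (n-1) - S) * (q n * (α - β))
        ≤ α * ((n:ℝ) * q n - S) * (α * q n - β * q (n-1)) := by linarith [hprod]
    have h12 : θ₁ * ((α * q n - β * q (n-1)) * (q n * (α - β)))
        ≤ θ₂ * ((α * q n - β * q (n-1)) * (q n * (α - β))) := by
      calc θ₁ * ((α * q n - β * q (n-1)) * (q n * (α - β)))
          = (θ₁ * (α * q n - β * q (n-1))) * (q n * (α - β)) := by ring
        _ = α * ((n:ℝ) * q (n-1) - S) * (q n * (α - β)) := by rw [hθ₁']
        _ ≤ α * ((n:ℝ) * q n - S) * (α * q n - β * q (n-1)) := hkey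
        _ = (θ₂ * (q n * (α - β))) * (α * q n - β * q (n-1)) := by rw [hθ₂']
        _ = θ₂ * ((α * q n - β * q (n-1)) * (q n * (α - β))) := by ring
    exact le_of_mul_le_mul_right h12 (mul_pos hD1 hD2)
  have hαden : 0 < ((n:ℝ) + 1 - 2) * α + β := by
    have := mul_nonneg (by linarith : (0:ℝ) ≤ (n:ℝ) - 1) hα0.le
    linarith
  have hprior' : p n * (((n:ℝ) - 1) * α + β) ≤ α * Sp + β := by
    push_cast at hprior
    have h1 : p n * (((n:ℝ) + 1 - 2) * α + β) ≤ α * Sp + β :=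
      (le_div_iff₀ hαden).mp hprior
    linarith [h1]
  have hqn' : q n = β + (α - β) * p n := hq n
  have hθ₂1 : θ₂ ≤ 1 := by
    have hlin : α * ((n:ℝ) * p n - Sp) ≤ β + (α - β) * p n := by linarith [hprior']
    have h3 : (α - β) * (α * ((n:ℝ) * p n - Sp)) ≤ (α - β) * (β + (α - β) * p n) :=
      mul_le_mul_of_nonneg_left hlin (by linarith)
    have e3 : α * ((n:ℝ) * q n - S) = (α - β) * (α * ((n:ℝ) * p n - Sp)) := by
      rw [hqn', hSq]; ring
    have e4 : q n * (α - β) = (α - β) * (β + (α - β) * p n) := by rw [hqn']; ring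
    have h1 : θ₂ * (q n * (α - β)) ≤ 1 * (q n * (α - β)) := by
      rw [hθ₂', one_mul, e3, e4]; exact h3
    exact le_of_mul_le_mul_right h1 hD2
  -- ## the joint distribution and its marginals
  set Pm : Fin k → Fin k → ℝ := fun i j => p i.val * (if j = i then α else β)
    with hPm
  have hPdiag : ∀ x : Fin k, Pm x x = p x.val * α := fun x => by
    rw [hPm]; simp
  have hPoff : ∀ x y : Fin k, x ≠ y → Pm x y = p x.val * β := fun x y hxy => by
    rw [hPm]; simp only; rw [if_neg (Ne.symm hxy)]
  have hite : ∀ x : Fin k, ∑ y : Fin k, (if y = x then α else β)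
      = α + ((k:ℝ) - 1) * β := by
    intro x
    have h1 : ∀ y : Fin k, (if y = x then α else β)
        = β + (if y = x then α - β else 0) := by
      intro y; split_ifs <;> ring
    rw [Finset.sum_congr rfl (fun y _ => h1 y), Finset.sum_add_distrib,
      Finset.sum_const, Finset.sum_ite_eq' Finset.univ x (fun _ => α - β),
      if_pos (Finset.mem_univ x), Finset.card_univ, Fintype.card_fin,
      nsmul_eq_mul]
    ring
  have hPx : ∀ x : Fin k, margX Pm x = p x.val := by
    intro x
    unfold margX
    rw [hPm]
    simp only
    rw [← Finset.mul_sum, hite, hsum1, mul_one]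
  have hPy : ∀ y : Fin k, margY Pm y = q y.val := by
    intro y
    unfold margY
    rw [hPm]; simp only
    have h1 : ∀ x : Fin k, p x.val * (if y = x then α else β)
        = β * p x.val + (if x = y then (α - β) * p x.val else 0) := by
      intro x
      by_cases h : x = y
      · subst h; rw [if_pos rfl, if_pos rfl]; ring
      · rw [if_neg (fun hh => h (Eq.symm hh)), if_neg h]; ring
    rw [Finset.sum_congr rfl (fun x _ => h1 x), Finset.sum_add_distrib,
      ← Finset.mul_sum, Finset.sum_ite_eq' Finset.univ y _,
      if_pos (Finset.mem_univ y)]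
    have h2 : ∑ x : Fin k, p x.val = 1 := by
      rw [Fin.sum_univ_eq_sum_range (fun j => p j) k]; exact hpsum
    rw [h2, hq y.val]
    ring
  have hPnn : ∀ x y, 0 ≤ Pm x y := fun x y => by
    rw [hPm]; simp only; split_ifs
    · exact mul_nonneg (hp x.val x.isLt).le hα0.le
    · exact mul_nonneg (hp x.val x.isLt).le hβ0.le
  have hqβ : ∀ j, j < k → β ≤ q j := fun j hj => by
    rw [hq]
    have := mul_pos (show (0:ℝ) < α - β by linarith) (hp j hj)
    linarith
  set C : ℝ := α / β with hC
  have hC1 : 1 ≤ C := (one_le_div hβ0).mpr hβα.le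
  have hC0 : 0 < C := lt_of_lt_of_le one_pos hC1
  have hPle : ∀ x y : Fin k, Pm x y ≤ p x.val * (C * q y.val) := by
    intro x y
    rw [hPm]; simp only
    have hpx := (hp x.val x.isLt).le
    have hqy := hqβ y.val y.isLt
    split_ifs
    · apply mul_le_mul_of_nonneg_left _ hpx
      calc α = C * β := by rw [hC]; field_simp
      _ ≤ C * q y.val := mul_le_mul_of_nonneg_left hqy hC0.le
    · apply mul_le_mul_of_nonneg_left _ hpx
      calc β ≤ q y.val := hqy
      _ = 1 * q y.val := (one_mul _).symm
      _ ≤ C * q y.val := mul_le_mul_of_nonneg_right hC1 (le_trans hβ0.le hqy)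
  have ht₀m : ∀ (m : ℕ) (K : Fin k → Fin m → ℝ), IsKernel K →
      ∀ z, pml (pushKernel Pm K) z ≤ Real.log C := fun m K hK z =>
    pml_push_le (by omega) Pm p q C hC1 hPnn hPx hp hPy
      (fun j hj => (hq0 j hj).le) hPle K hK z
  have ht₀k : ∀ (K : Fin k → Fin k → ℝ), IsKernel K →
      ∀ z, pml (pushKernel Pm K) z ≤ Real.log C := ht₀m k
  have hδ0 : 0 < δ := lt_trans (hq0 0 (by omega)) hδl
  -- ## the set of achievable quantile values
  set Eset : Set ℝ := {e : ℝ | ∃ (m : ℕ) (K : Fin k → Fin m → ℝ),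
      IsKernel K ∧ e = ubarEps (pushKernel Pm K) δ} with hEset
  have hgoal : pmlEnvelope Pm δ = sSup Eset := rfl
  have hbdd : ∀ e ∈ Eset, e ≤ Real.log C := by
    rintro e ⟨m, K, hK, rfl⟩
    apply ubar_le _ _ _ (Real.log_nonneg hC1)
    have hf : Finset.univ.filter
        (fun z : Fin m => pml (pushKernel Pm K) z ≤ Real.log C)
        = Finset.univ := Finset.filter_true_of_mem fun z _ => ht₀m m K hK z
    rw [hf]
    have htot : ∑ z, margY (pushKernel Pm K) z = 1 := by
      rw [sum_margY_pushKernel Pm K hK.2, Finset.sum_congr rfl (fun y _ => hPy y),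
        Fin.sum_univ_eq_sum_range (fun j => q j) k, hqsumk]
    rw [htot]; linarith
  have final : ∀ L : ℝ, (∀ ε : ℝ, 0 < ε → ∃ e ∈ Eset, L - ε ≤ e)
      → L ≤ sSup Eset := by
    intro L hL
    by_contra hcon
    push_neg at hcon
    obtain ⟨e, heE, he⟩ := hL ((L - sSup Eset)/2) (by linarith)
    have h2 := le_csSup ⟨Real.log C, hbdd⟩ heE
    linarith
  -- ## identities relating the envelope thresholds to the ratio function
  have hΛθ₁ : 0 ≤ θ₁ →
      ((n:ℝ) * α + θ₁ * β) / (S + θ₁ * q n) = α / q (n-1) := by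
    intro h0
    have hden : 0 < S + θ₁ * q n :=
      add_pos_of_pos_of_nonneg hS0 (mul_nonneg h0 hqn.le)
    rw [div_eq_div_iff hden.ne' hqn1.ne']
    linear_combination (-1 : ℝ) * hθ₁'
  have hΛθ₂ : ((n:ℝ) * α + θ₂ * β) / (S + θ₂ * q n) = α / q n := by
    have hden : 0 < S + θ₂ * q n :=
      add_pos_of_pos_of_nonneg hS0 (mul_nonneg hθ₂0 hqn.le)
    rw [div_eq_div_iff hden.ne' hqn.ne']
    linear_combination (-1 : ℝ) * hθ₂'
  rw [hgoal]
  apply final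
  intro ε hε
  -- ## case analysis on the regime
  by_cases hθe1 : θ = 1
  · -- θ = 1 : σ-perturbation of the identity kernel, value log (α / q n)
    have hNltk : n + 1 < k := by
      by_contra hcont
      have hek : n + 1 = k := by omega
      have hδe : δ = 1 := by
        rw [hSd, hθe1, one_mul, ← hrangeN, hek, hqsumk]
      linarith
    obtain ⟨σ, hσ0, hσ1, hσ⟩ := aux_eta α (q n) β (q (n+1)) 1 ε hα0 hqn hβ0.le
      (hq0 _ hNltk) one_pos hε
    obtain ⟨K, hK, hub⟩ := keyA_kernel hn1 hNltk p q α β δ σ hβ0 hβα hp hq0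
      hqmono hqsumk Pm hPx hPdiag hPoff hPy hσ0 hσ1 hδ0
      (by rw [hSd, hθe1, one_mul]) (Real.log C) (Real.log_nonneg hC1) ht₀k
    refine ⟨_, ⟨k, K, hK, rfl⟩, ?_⟩
    have hlog : Real.log (α / q n) - ε ≤ ubarEps (pushKernel Pm K) δ :=
      le_trans (by linarith [hσ]) hub
    split_ifs with h1 h2
    · have hθ₁1 : θ₁ = 1 := le_antisymm (le_trans hθ12 hθ₂1) (hθe1 ▸ h1)
      have hθ₂e : θ₂ = 1 := le_antisymm hθ₂1 (hθe1 ▸ (h1.trans hθ12))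
      have a1 := hθ₁'; rw [hθ₁1, one_mul] at a1
      have a2 := hθ₂'; rw [hθ₂e, one_mul] at a2
      have hz : (q n - q (n-1)) * (β + (n:ℝ) * α) = 0 := by
        linear_combination a1 - a2
      have hqe : q (n-1) = q n := by
        have hpos : 0 < β + (n:ℝ) * α := by
          have := mul_nonneg (Nat.cast_nonneg n : (0:ℝ) ≤ n) hα0.le
          linarith
        rcases mul_eq_zero.mp hz with h | h
        · linarith
        · exfalso; linarith
      rw [hqe]; exact hlog
    · have hθ₂e : θ₂ = 1 := le_antisymm hθ₂1 (hθe1 ▸ h2)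
      have a2 := hθ₂'; rw [hθ₂e, one_mul] at a2
      have harg2 : (((↑(n+1) : ℝ) - 1) * α + θ * β) / δ = α / q n := by
        rw [hθe1, hSd, hθe1]
        rw [div_eq_div_iff (by linarith [hqn] : (0:ℝ) < S + 1 * q n).ne' hqn.ne']
        push_cast
        linear_combination (-1 : ℝ) * a2
      rw [harg2]; exact hlog
    · exact hlog
  · -- θ < 1
    have hθlt1 : θ < 1 := lt_of_le_of_ne hθ1e hθe1
    by_cases hc1 : θ < θ₁
    · -- first regime, exact construction with G₀ = θ₁
      have hθ₁0 : 0 ≤ θ₁ := le_of_lt (lt_trans hθ0 hc1)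
      have hcok : ((n:ℝ) * α + θ₁ * β) * q (n-1) ≤ α * (S + θ₁ * q n) :=
        le_of_eq (by linear_combination (-1 : ℝ) * hθ₁')
      obtain ⟨K, hK, hub⟩ := keyB_kernel hn1 hnk p q α β δ θ₁ hβ0 hβα hp hq0
        hqmono hqsumk Pm hPx hPdiag hPoff hPy (le_trans hθ12 hθ₂1) hNl hδ0
        (by rw [hSd]
            have := mul_lt_mul_of_pos_right hc1 hqn
            linarith)
        hcok (Real.log C) (Real.log_nonneg hC1) ht₀k
      refine ⟨_, ⟨k, K, hK, rfl⟩, ?_⟩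
      rw [if_pos hc1.le, ← hΛθ₁ hθ₁0]
      linarith [hub]
    · by_cases hc2 : θ ≤ θ₂
      · -- middle regime, G₀ = θ + η
        have hθ₁θ : θ₁ ≤ θ := not_lt.mp hc1
        have hnum2 : 0 < (n:ℝ) * α + θ * β := by
          have h1 : (1:ℝ) * α ≤ (n:ℝ) * α := mul_le_mul_of_nonneg_right hn1' hα0.le
          have := mul_pos hθ0 hβ0
          linarith
        have hden2 : 0 < S + θ * q n := add_pos hS0 (mul_pos hθ0 hqn)
        obtain ⟨η, hη0, hη1, hη⟩ := aux_eta ((n:ℝ) * α + θ * β) (S + θ * q n)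
          β (q n) (1 - θ) ε hnum2 hden2 hβ0.le hqn (by linarith) hε
        have hcok2 : ((n:ℝ) * α + (θ+η) * β) * q (n-1)
            ≤ α * (S + (θ+η) * q n) := by
          have h1 : θ₁ * (α * q n - β * q (n-1))
              ≤ (θ+η) * (α * q n - β * q (n-1)) :=
            mul_le_mul_of_nonneg_right (by linarith) hD1.le
          rw [hθ₁'] at h1
          linarith [h1]
        obtain ⟨K, hK, hub⟩ := keyB_kernel hn1 hnk p q α β δ (θ+η) hβ0 hβα hp
          hq0 hqmono hqsumk Pm hPx hPdiag hPoff hPy (by linarith) hNl hδ0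
          (by rw [hSd]
              have := mul_pos hη0 hqn
              linarith)
          hcok2 (Real.log C) (Real.log_nonneg hC1) ht₀k
        refine ⟨_, ⟨k, K, hK, rfl⟩, ?_⟩
        have harg : ((n:ℝ) * α + (θ+η) * β) / (S + (θ+η) * q n)
            = (((n:ℝ) * α + θ * β) + η * β) / ((S + θ * q n) + η * q n) := by
          ring_nf
        rw [harg] at hub
        split_ifs with h1
        · have hθθ₁ : θ₁ = θ := le_antisymm hθ₁θ h1
          have hA := hΛθ₁ (hθθ₁ ▸ hθ0.le)
          rw [hθθ₁] at hA
          rw [← hA]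
          linarith [hη, hub]
        · have harg2 : (((↑(n+1) : ℝ) - 1) * α + θ * β) / δ
              = ((n:ℝ) * α + θ * β) / (S + θ * q n) := by
            rw [hSd]; push_cast; ring
          rw [harg2]
          linarith [hη, hub]
      · -- third regime, G₀ = θ₂ + η with the tail point
        push_neg at hc2
        have hc1' : ¬ θ ≤ θ₁ := fun h => absurd (le_trans h hθ12) (not_le.mpr hc2)
        rw [if_neg hc1', if_neg (not_le.mpr hc2)]
        have hθ₂lt1 : θ₂ < 1 := lt_trans hc2 hθlt1
        have hnum2 : 0 < (n:ℝ) * α + θ₂ * β := by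
          have h1 : (1:ℝ) * α ≤ (n:ℝ) * α := mul_le_mul_of_nonneg_right hn1' hα0.le
          have := mul_nonneg hθ₂0 hβ0.le
          linarith
        have hden2 : 0 < S + θ₂ * q n :=
          add_pos_of_pos_of_nonneg hS0 (mul_nonneg hθ₂0 hqn.le)
        obtain ⟨η, hη0, hη1, hη⟩ := aux_eta ((n:ℝ) * α + θ₂ * β) (S + θ₂ * q n)
          β (q n) ((1 - θ₂)/2) ε hnum2 hden2 hβ0.le hqn (by linarith) hε
        have hcok2 : ((n:ℝ) * α + (θ₂+η) * β) * q (n-1)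
            ≤ α * (S + (θ₂+η) * q n) := by
          have h1 : θ₁ * (α * q n - β * q (n-1))
              ≤ (θ₂+η) * (α * q n - β * q (n-1)) :=
            mul_le_mul_of_nonneg_right (by linarith) hD1.le
          rw [hθ₁'] at h1
          linarith [h1]
        have hqnok : ((n:ℝ) * α + (θ₂+η) * β) * q n
            ≤ α * (S + (θ₂+η) * q n) := by
          have h1 : θ₂ * (q n * (α - β)) ≤ (θ₂+η) * (q n * (α - β)) :=
            mul_le_mul_of_nonneg_right (by linarith) hD2.le
          rw [hθ₂'] at h1
          linarith [h1]
        have hmassC : δ < S + q n := by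
          rw [hSd]
          have := mul_lt_mul_of_pos_right hθlt1 hqn
          linarith
        obtain ⟨K, hK, hub⟩ := keyC_kernel hn1 hnk p q α β δ (θ₂+η) hβ0 hβα hp
          hq0 hqmono hqsumk Pm hPx hPdiag hPoff hPy (by linarith) (by linarith)
          hδ0 hmassC hcok2 hqnok (Real.log C) (Real.log_nonneg hC1) ht₀k
        refine ⟨_, ⟨k, K, hK, rfl⟩, ?_⟩
        have harg : ((n:ℝ) * α + (θ₂+η) * β) / (S + (θ₂+η) * q n)
            = (((n:ℝ) * α + θ₂ * β) + η * β) / ((S + θ₂ * q n) + η * q n) := by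
          ring_nf
        rw [harg] at hub
        rw [← hΛθ₂]
        linarith [hη, hub]
end
end

section
/- Let k ≥ 2, ε_r > 0, let P_X be a distribution on {1,…,k} with p_i = P_X(i) > 0 and p_1 ≤ … ≤ p_k, and let P_{Y|X} be the k-randomized response mechanism with α = e^{ε_r}/(e^{ε_r}+k−1), β = 1/(e^{ε_r}+k−1), q_j = β + (α−β)p_j. Fix δ ∈ (q_1, 1), let N ∈ {2,…,k} be the unique index with Σ_{j=1}^{N−1} q_j < δ ≤ Σ_{j=1}^{N} q_j, and θ = (δ − Σ_{j=1}^{N−1} q_j)/q_N. Then the binary envelope satisfies ε_b(δ) = log((α + (N−2+θ)β)/δ); equivalently, the supremum of the randomized-event leakage ℓ(X → w) = log max_x (Σ_y w(y) P_{Y|X=x}(y))/(Σ_y w(y) q_y) over weight functions w: {1,…,k} → [0,1] with Σ_y w(y) q_y ≥ δ equals log((α + (N−2+θ)β)/δ). -/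
set_option maxHeartbeats 4000000


open Real Finset
open scoped Classical

/-- Binary envelope of the `k`-randomized response mechanism,
in its equivalent randomized-event formulation. The prior `p` and output marginal
`q` are indexed by `ℕ`, with index `j ∈ {0, …, k-1}` corresponding to the paper's
index `j+1 ∈ {1, …, k}` (so the paper's `q_N` is `q (N-1)`). The supremum of the
randomized-event leakage `ℓ(X → w) = log (max_x (∑_y w_y P_{Y|X=x}(y)) / (∑_y w_y q_y))`
over weight functions `w : {1,…,k} → [0,1]` with `∑_y w_y q_y ≥ δ` equals
`log ((α + (N-2+θ) β) / δ)`. -/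
theorem binary_envelope_krr
    (k : ℕ) (hk : 2 ≤ k) (εr : ℝ) (hεr : 0 < εr)
    (p : ℕ → ℝ) (hp : ∀ i, i < k → 0 < p i)
    (hpsum : ∑ i ∈ Finset.range k, p i = 1)
    (hmono : ∀ i j, i ≤ j → j < k → p i ≤ p j)
    (α β : ℝ)
    (hα : α = Real.exp εr / (Real.exp εr + k - 1))
    (hβ : β = 1 / (Real.exp εr + k - 1))
    (q : ℕ → ℝ) (hq : ∀ j, q j = β + (α - β) * p j)
    (δ : ℝ) (hδl : q 0 < δ) (hδu : δ < 1)
    (N : ℕ) (hN2 : 2 ≤ N) (hNk : N ≤ k)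
    (hNl : ∑ j ∈ Finset.range (N - 1), q j < δ)
    (hNu : δ ≤ ∑ j ∈ Finset.range N, q j)
    (θ : ℝ) (hθ : θ = (δ - ∑ j ∈ Finset.range (N - 1), q j) / q (N - 1)) :
    sSup {e : ℝ | ∃ w : Fin k → ℝ, (∀ y, 0 ≤ w y ∧ w y ≤ 1) ∧
        δ ≤ ∑ y, w y * q y.val ∧
        e = Real.log ((⨆ x : Fin k, ∑ y, w y * (if y = x then α else β)) /
              (∑ y, w y * q y.val))}
      = Real.log ((α + ((N : ℝ) - 2 + θ) * β) / δ) := by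
  haveI : Nonempty (Fin k) := ⟨⟨0, by omega⟩⟩
  obtain ⟨M, rfl⟩ : ∃ M, N = M + 1 := ⟨N - 1, by omega⟩
  simp only [Nat.add_sub_cancel] at hNl hθ
  have hM1 : 1 ≤ M := by omega
  have hkR : (2:ℝ) ≤ (k:ℝ) := by exact_mod_cast hk
  have hcastM : ((M+1:ℕ):ℝ) = (M:ℝ) + 1 := by push_cast; ring
  have hE : 1 < Real.exp εr := by
    rw [← Real.exp_zero]; exact Real.exp_lt_exp.2 hεr
  have hD : 0 < Real.exp εr + k - 1 := by linarith
  have hβ0 : 0 < β := by rw [hβ]; positivity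
  have hA : 0 < α - β := by
    have : α - β = (Real.exp εr - 1) / (Real.exp εr + k - 1) := by
      rw [hα, hβ]; ring
    rw [this]; exact div_pos (by linarith) hD
  have hqpos : ∀ j, j < k → 0 < q j := by
    intro j hj; rw [hq]; nlinarith [hp j hj]
  have hqβ : ∀ j, j < k → β ≤ q j := by
    intro j hj; rw [hq]; nlinarith [hp j hj]
  have hqmono : ∀ i j, i ≤ j → j < k → q i ≤ q j := by
    intro i j hij hj; rw [hq, hq]
    nlinarith [hmono i j hij hj]
  have hMk : M < k := by omega
  have hqN : 0 < q M := hqpos _ hMk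
  have hδ0 : 0 < δ := lt_trans (hqpos 0 (by omega)) hδl
  have hsplit : ∑ j ∈ Finset.range (M+1), q j = ∑ j ∈ Finset.range M, q j + q M :=
    Finset.sum_range_succ q M
  have hθ1 : θ ≤ 1 := by
    rw [hθ, div_le_one hqN]; linarith
  have hθ0 : 0 < θ := by
    rw [hθ]; exact div_pos (by linarith) hqN
  have hδq : δ = ∑ j ∈ Finset.range M, q j + θ * q M := by
    rw [hθ]; field_simp; ring
  -- δ ≤ numerator
  have hqsum : ∑ j ∈ Finset.range M, q j
      = (M:ℝ) * β + (α-β) * ∑ j ∈ Finset.range M, p j := by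
    rw [Finset.sum_congr rfl (fun j _ => hq j), Finset.sum_add_distrib, ← Finset.mul_sum,
      Finset.sum_const, Finset.card_range, nsmul_eq_mul]
  have hple : ∑ j ∈ Finset.range M, p j + θ * p M ≤ 1 := by
    have h1 : ∑ j ∈ Finset.range (M+1), p j = ∑ j ∈ Finset.range M, p j + p M :=
      Finset.sum_range_succ p M
    have h2 : ∑ j ∈ Finset.range (M+1), p j ≤ ∑ j ∈ Finset.range k, p j :=
      Finset.sum_le_sum_of_subset_of_nonneg (Finset.range_subset_range.2 hNk)
        (fun i hi _ => (hp i (Finset.mem_range.1 hi)).le)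
    nlinarith [hp M hMk]
  have hδNum : δ ≤ α + (((M+1:ℕ):ℝ) - 2 + θ) * β := by
    rw [hδq, hqsum, hq M]
    push_cast
    nlinarith [hple]
  set C : ℝ := (α + (((M+1:ℕ):ℝ) - 2 + θ) * β) / δ with hC
  have hC1 : 1 ≤ C := (one_le_div hδ0).2 hδNum
  have hCδ : C * δ = β * ((M:ℝ) + θ) + (α - β) := by
    rw [hC]; push_cast; field_simp; ring
  have hr0 : β / q M ≤ C := by
    have : β / q M ≤ 1 := (div_le_one hqN).2 (hqβ _ hMk)
    linarith
  -- the optimal witness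
  set wst : Fin k → ℝ := fun y => if (y:ℕ) < M then 1 else if (y:ℕ) = M then θ else 0
    with hwst
  have hwst01 : ∀ y, 0 ≤ wst y ∧ wst y ≤ 1 := by
    intro y; rw [hwst]; dsimp only; split_ifs <;> constructor <;> linarith
  have hSst : ∑ y : Fin k, wst y * q y.val = δ := by
    have e1 : ∑ y : Fin k, wst y * q y.val
        = ∑ j ∈ Finset.range k, (if j < M then (1:ℝ) else if j = M then θ else 0) * q j :=
      Fin.sum_univ_eq_sum_range (fun j => (if j < M then (1:ℝ) else if j = M then θ else 0) * q j) k
    rw [e1]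
    have e2 : ∑ j ∈ Finset.range k, (if j < M then (1:ℝ) else if j = M then θ else 0) * q j
        = ∑ j ∈ Finset.range (M+1), (if j < M then (1:ℝ) else if j = M then θ else 0) * q j := by
      refine (Finset.sum_subset (Finset.range_subset_range.2 hNk) ?_).symm
      intro x hx hnx
      rw [Finset.mem_range] at hx hnx
      rw [if_neg (by omega), if_neg (by omega), zero_mul]
    have e3 : ∑ j ∈ Finset.range M, (if j < M then (1:ℝ) else if j = M then θ else 0) * q j
        = ∑ j ∈ Finset.range M, q j :=
      Finset.sum_congr rfl (fun j hj => by
        rw [Finset.mem_range] at hj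
        rw [if_pos hj, one_mul])
    rw [e2, Finset.sum_range_succ, if_neg (by omega), if_pos rfl, e3]
    exact hδq.symm
  have hTst : ∑ y : Fin k, wst y = (M:ℝ) + θ := by
    have e1 : ∑ y : Fin k, wst y
        = ∑ j ∈ Finset.range k, (if j < M then (1:ℝ) else if j = M then θ else 0) :=
      Fin.sum_univ_eq_sum_range (fun j => (if j < M then (1:ℝ) else if j = M then θ else 0)) k
    rw [e1]
    have e2 : ∑ j ∈ Finset.range k, (if j < M then (1:ℝ) else if j = M then θ else 0)
        = ∑ j ∈ Finset.range (M+1), (if j < M then (1:ℝ) else if j = M then θ else 0) := by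
      refine (Finset.sum_subset (Finset.range_subset_range.2 hNk) ?_).symm
      intro x hx hnx
      rw [Finset.mem_range] at hx hnx
      rw [if_neg (by omega), if_neg (by omega)]
    have e3 : ∑ j ∈ Finset.range M, (if j < M then (1:ℝ) else if j = M then θ else 0)
        = ∑ _j ∈ Finset.range M, (1:ℝ) :=
      Finset.sum_congr rfl (fun j hj => by
        rw [Finset.mem_range] at hj
        rw [if_pos hj])
    rw [e2, Finset.sum_range_succ, if_neg (by omega), if_pos rfl, e3,
      Finset.sum_const, Finset.card_range, nsmul_eq_mul, mul_one]
  -- row sums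
  have hrow : ∀ (w : Fin k → ℝ) (x : Fin k),
      ∑ y : Fin k, w y * (if y = x then α else β) = β * (∑ y : Fin k, w y) + (α - β) * w x := by
    intro w x
    rw [Finset.sum_congr rfl (fun y _ => (by split_ifs <;> ring :
      w y * (if y = x then α else β) = β * w y + (if y = x then (α - β) * w y else 0)))]
    rw [Finset.sum_add_distrib, ← Finset.mul_sum,
      Finset.sum_eq_single x (fun b _ hb => if_neg hb) (fun h => absurd (Finset.mem_univ x) h),
      if_pos rfl]
  -- the key upper bound for arbitrary feasible w
  have key : ∀ w : Fin k → ℝ, (∀ y, 0 ≤ w y ∧ w y ≤ 1) → δ ≤ ∑ y : Fin k, w y * q y.val →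
      β * (∑ y : Fin k, w y) + (α - β) ≤ C * (∑ y : Fin k, w y * q y.val) := by
    intro w hw hS
    have h1 : 0 ≤ ∑ y : Fin k, (w y - wst y) * (β / q M * q y.val - β) := by
      apply Finset.sum_nonneg
      intro y _
      have hy : (y:ℕ) < k := y.isLt
      rcases lt_trichotomy (y:ℕ) M with hlt | heq | hgt
      · have hw1 : wst y = 1 := by rw [hwst]; dsimp only; rw [if_pos hlt]
        have hqy : q y.val ≤ q M := hqmono _ _ (by omega) hMk
        have hs : β / q M * q y.val - β ≤ 0 := by
          rw [sub_nonpos, div_mul_eq_mul_div, div_le_iff₀ hqN]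
          nlinarith
        rw [hw1]
        nlinarith [hs, (hw y).2]
      · have hs : β / q M * q y.val - β = 0 := by
          rw [heq, div_mul_cancel₀ β (ne_of_gt hqN), sub_self]
        rw [hs, mul_zero]
      · have hw0 : wst y = 0 := by
          rw [hwst]; dsimp only; rw [if_neg (by omega), if_neg (by omega)]
        have hqy : q M ≤ q y.val := hqmono _ _ (by omega) hy
        have hs : 0 ≤ β / q M * q y.val - β := by
          rw [sub_nonneg, div_mul_eq_mul_div, le_div_iff₀ hqN]
          nlinarith
        rw [hw0, sub_zero]
        exact mul_nonneg (hw y).1 hs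
    have expand : ∑ y : Fin k, (w y - wst y) * (β / q M * q y.val - β)
        = β / q M * ((∑ y : Fin k, w y * q y.val) - δ)
          - β * ((∑ y : Fin k, w y) - ((M:ℝ) + θ)) := by
      rw [← hSst, ← hTst]
      rw [Finset.sum_congr rfl (fun y _ => (by ring :
        (w y - wst y) * (β / q M * q y.val - β)
          = (β / q M * (w y * q y.val) - β * w y)
            - (β / q M * (wst y * q y.val) - β * wst y)))]
      simp only [Finset.sum_sub_distrib, ← Finset.mul_sum]
      ring
    rw [expand] at h1
    have h3 : 0 ≤ (C - β / q M) * ((∑ y : Fin k, w y * q y.val) - δ) :=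
      mul_nonneg (by linarith) (by linarith)
    nlinarith [hCδ]
  -- upper bound on every element of the set
  have hub : ∀ e ∈ {e : ℝ | ∃ w : Fin k → ℝ, (∀ y, 0 ≤ w y ∧ w y ≤ 1) ∧
        δ ≤ ∑ y, w y * q y.val ∧
        e = Real.log ((⨆ x : Fin k, ∑ y, w y * (if y = x then α else β)) /
              (∑ y, w y * q y.val))}, e ≤ Real.log C := by
    rintro e ⟨w, hw, hS, rfl⟩
    have hS0 : 0 < ∑ y : Fin k, w y * q y.val := lt_of_lt_of_le hδ0 hS
    have hTpos : 0 < ∑ y : Fin k, w y := by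
      have hb : ∑ y : Fin k, w y * q y.val ≤ q (k-1) * ∑ y : Fin k, w y := by
        rw [Finset.mul_sum]
        apply Finset.sum_le_sum
        intro y _
        have h := hqmono y.val (k-1) (by omega) (by omega)
        nlinarith [(hw y).1]
      nlinarith [hqpos (k-1) (by omega)]
    have hsup_le : (⨆ x : Fin k, ∑ y : Fin k, w y * (if y = x then α else β))
        ≤ C * ∑ y : Fin k, w y * q y.val := by
      apply ciSup_le
      intro x
      rw [hrow w x]
      have := key w hw hS
      nlinarith [(hw x).2]
    have hsup_pos : 0 < ⨆ x : Fin k, ∑ y : Fin k, w y * (if y = x then α else β) := by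
      have hle : β * (∑ y : Fin k, w y)
          ≤ ⨆ x : Fin k, ∑ y : Fin k, w y * (if y = x then α else β) := by
        refine le_trans ?_
          (le_ciSup (Set.Finite.bddAbove (Set.finite_range _)) (⟨0, by omega⟩ : Fin k))
        rw [hrow w ⟨0, by omega⟩]
        nlinarith [(hw ⟨0, by omega⟩).1]
      nlinarith
    apply Real.log_le_log (div_pos hsup_pos hS0)
    rw [div_le_iff₀ hS0]
    exact hsup_le
  -- membership of the claimed value
  have hmem : Real.log C ∈ {e : ℝ | ∃ w : Fin k → ℝ, (∀ y, 0 ≤ w y ∧ w y ≤ 1) ∧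
        δ ≤ ∑ y, w y * q y.val ∧
        e = Real.log ((⨆ x : Fin k, ∑ y, w y * (if y = x then α else β)) /
              (∑ y, w y * q y.val))} := by
    refine ⟨wst, hwst01, le_of_eq hSst.symm, ?_⟩
    have hsup : (⨆ x : Fin k, ∑ y : Fin k, wst y * (if y = x then α else β))
        = α + (((M+1:ℕ):ℝ) - 2 + θ) * β := by
      rw [iSup_congr (fun x => hrow wst x), hTst]
      apply le_antisymm
      · apply ciSup_le
        intro x
        rw [hcastM]
        nlinarith [(hwst01 x).2]
      · have h0 : wst (⟨0, by omega⟩ : Fin k) = 1 := by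
          rw [hwst]; dsimp only; rw [if_pos (by omega : 0 < M)]
        refine le_trans ?_
          (le_ciSup (Set.Finite.bddAbove (Set.finite_range _)) (⟨0, by omega⟩ : Fin k))
        rw [h0, hcastM]
        ring_nf
        exact le_refl _
    rw [hsup, hSst, hC]
  exact le_antisymm (csSup_le ⟨_, hmem⟩ hub) (le_csSup ⟨_, hub⟩ hmem)
end
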